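/- Let X be a T1 topological space in which every nonempty open set is infinite. Then: (1) Player Two has a winning strategy in the closed discrete selection game G₁(𝒯_X, CD_X) if and only if Player Two has a winning strategy in the injective game G⃗₁(𝒯_X, CD*_X); and (2) Player One has a winning strategy in G₁(𝒯_X, CD_X) if and only if Player One has a winning strategy in G⃗₁(𝒯_X, CD*_X). -/

import Mathlib

variable (X : Type*) [TopologicalSpace X]

/-- A set is relatively discrete if each of its points has an open neighborhood
meeting the set only in that point. -/
def RelDiscrete (A : Set X) : Prop :=
  ∀ a ∈ A, ∃ V : Set X, IsOpen V ∧ V ∩ A = {a}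

/-- A strategy for Player Two maps a history of previously played open sets
together with the current open set to a point; it is valid if it always picks a
point of the current (nonempty open) set. -/
def ValidP2 (τ : List (Set X) → Set X → X) : Prop :=
  ∀ (h : List (Set X)) (U : Set X), IsOpen U → U.Nonempty → τ h U ∈ U

/-- The play of Player Two's strategy `τ` against the sequence `U` of moves of
Player One. -/
def playP2 (τ : List (Set X) → Set X → X) (U : ℕ → Set X) (n : ℕ) : X :=
  τ (List.ofFn fun i : Fin n => U i) (U n)

/-- Player Two has a winning strategy in the closed discrete selection game
`G₁(𝒯_X, CD_X)`. -/
def P2WinsCD : Prop :=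
  ∃ τ : List (Set X) → Set X → X, ValidP2 X τ ∧
    ∀ U : ℕ → Set X, (∀ n, IsOpen (U n)) → (∀ n, (U n).Nonempty) →
      IsClosed (Set.range (playP2 X τ U)) ∧
        RelDiscrete X (Set.range (playP2 X τ U))

/-- Player Two has a winning strategy in the injective game `G⃗₁(𝒯_X, CD*_X)`. -/
def P2WinsCDstar : Prop :=
  ∃ τ : List (Set X) → Set X → X, ValidP2 X τ ∧
    ∀ U : ℕ → Set X, (∀ n, IsOpen (U n)) → (∀ n, (U n).Nonempty) →
      Function.Injective (playP2 X τ U) ∧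
        IsClosed (Set.range (playP2 X τ U)) ∧
          RelDiscrete X (Set.range (playP2 X τ U))

/-- Player One has a winning strategy in the closed discrete selection game
`G₁(𝒯_X, CD_X)`: a function from histories of Player Two's points to nonempty
open sets defeating every play of Player Two. -/
def P1WinsCD : Prop :=
  ∃ σ : List X → Set X, (∀ h, IsOpen (σ h) ∧ (σ h).Nonempty) ∧
    ∀ x : ℕ → X, (∀ n, x n ∈ σ (List.ofFn fun i : Fin n => x i)) →
      ¬ (IsClosed (Set.range x) ∧ RelDiscrete X (Set.range x))

/-- Player One has a winning strategy in the injective game `G⃗₁(𝒯_X, CD*_X)`. -/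
def P1WinsCDstar : Prop :=
  ∃ σ : List X → Set X, (∀ h, IsOpen (σ h) ∧ (σ h).Nonempty) ∧
    ∀ x : ℕ → X, (∀ n, x n ∈ σ (List.ofFn fun i : Fin n => x i)) →
      ¬ (Function.Injective x ∧ IsClosed (Set.range x) ∧
          RelDiscrete X (Set.range x))


section Aux

variable {Y : Type*} [TopologicalSpace Y]

/-- Auxiliary: given Player Two's strategy `τ`, compute from the *reversed*
history of Player One's sets the reversed lists of points played and of shrunk
open sets fed to `τ`. -/
def starAux (τ : List (Set Y) → Set Y → Y) : List (Set Y) → List Y × List (Set Y)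
  | [] => ([], [])
  | U :: r =>
    (τ (starAux τ r).2.reverse (U \ {y | y ∈ (starAux τ r).1}) :: (starAux τ r).1,
     (U \ {y | y ∈ (starAux τ r).1}) :: (starAux τ r).2)

/-- The injectivized strategy. -/
def starStrat (τ : List (Set Y) → Set Y → Y) (h : List (Set Y)) (U : Set Y) : Y :=
  τ (starAux τ h.reverse).2.reverse (U \ {y | y ∈ (starAux τ h.reverse).1})

lemma inj_of_ne_lt {α : Type*} (x : ℕ → α) (h : ∀ m n, m < n → x n ≠ x m) :
    Function.Injective x := by
  intro a b hab
  rcases lt_trichotomy a b with hl | he | hl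
  · exact absurd hab.symm (h a b hl)
  · exact he
  · exact absurd hab (h b a hl)

lemma open_diff_list [T1Space Y] (hinf : ∀ U : Set Y, IsOpen U → U.Nonempty → U.Infinite)
    {U : Set Y} (hU : IsOpen U) (hne : U.Nonempty) (s : Set Y) (hs : s.Finite) :
    IsOpen (U \ s) ∧ (U \ s).Nonempty := by
  refine ⟨hU.sdiff hs.isClosed, ((hinf U hU hne).diff hs).nonempty⟩

end Aux

/-- let `X` be a T1 space in which every nonempty open set is
infinite.  Then Player Two has a winning strategy in `G₁(𝒯_X, CD_X)` iff Player
Two has a winning strategy in `G⃗₁(𝒯_X, CD*_X)`, and Player One has a winning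
strategy in `G₁(𝒯_X, CD_X)` iff Player One has one in `G⃗₁(𝒯_X, CD*_X)`. -/
theorem stmt12 [T1Space X]
    (hinf : ∀ U : Set X, IsOpen U → U.Nonempty → U.Infinite) :
    (P2WinsCD X ↔ P2WinsCDstar X) ∧ (P1WinsCD X ↔ P1WinsCDstar X) := by
  constructor
  · constructor
    · -- P2WinsCD → P2WinsCDstar
      rintro ⟨τ, hval, hwin⟩
      refine ⟨starStrat τ, ?_, ?_⟩
      · intro h U hU hne
        have hfin : ({y | y ∈ (starAux τ h.reverse).1} : Set X).Finite :=
          (starAux τ h.reverse).1.finite_toSet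
        obtain ⟨ho, hn⟩ := open_diff_list hinf hU hne _ hfin
        exact Set.diff_subset (hval (starAux τ h.reverse).2.reverse _ ho hn)
      · intro U hUopen hUne
        set x : ℕ → X := playP2 X (starStrat τ) U with hx
        set V : ℕ → Set X := fun n => U n \ {y | ∃ k < n, x k = y} with hV
        have hfin : ∀ n, ({y | ∃ k < n, x k = y} : Set X).Finite := by
          intro n
          have : ({y | ∃ k < n, x k = y} : Set X) = x '' (Set.Iio n) := by
            ext y; simp [Set.mem_image, eq_comm]
          rw [this]; exact (Set.finite_Iio n).image x
        have hVopen : ∀ n, IsOpen (V n) ∧ (V n).Nonempty := fun n =>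
          open_diff_list hinf (hUopen n) (hUne n) _ (hfin n)
        have hmem : ∀ n, ({y | y ∈ ((List.ofFn fun i : Fin n => x i).reverse)} : Set X)
            = {y | ∃ k < n, x k = y} := by
          intro n
          ext y
          simp only [Set.mem_setOf_eq, List.mem_reverse, List.mem_ofFn]
          constructor
          · rintro ⟨i, rfl⟩; exact ⟨i, i.2, rfl⟩
          · rintro ⟨k, hk, rfl⟩; exact ⟨⟨k, hk⟩, rfl⟩
        have hsplit : ∀ (n : ℕ) (f : ℕ → Set X),
            (List.ofFn fun i : Fin (n+1) => f i).reverse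
              = f n :: (List.ofFn fun i : Fin n => f i).reverse := by
          intro n f
          rw [List.ofFn_succ' (f := fun i : Fin (n+1) => f i)]
          simp [Fin.last]
        have hsplitx : ∀ (n : ℕ) (f : ℕ → X),
            (List.ofFn fun i : Fin (n+1) => f i).reverse
              = f n :: (List.ofFn fun i : Fin n => f i).reverse := by
          intro n f
          rw [List.ofFn_succ' (f := fun i : Fin (n+1) => f i)]
          simp [Fin.last]
        have key : ∀ n : ℕ, starAux τ ((List.ofFn fun i : Fin n => U i).reverse) =
            ((List.ofFn fun i : Fin n => x i).reverse,
             (List.ofFn fun i : Fin n => V i).reverse) := by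
          intro n
          induction n with
          | zero => simp [starAux]
          | succ n ih =>
            rw [hsplit n U]
            have hxn : x n = τ (List.ofFn fun i : Fin n => V i) (V n) := by
              show starStrat τ (List.ofFn fun i : Fin n => U i) (U n) = _
              rw [starStrat, ih]
              simp only [List.reverse_reverse, hmem n]
              rfl
            have hVn : U n \ ({y | ∃ k < n, x k = y} : Set X) = V n := rfl
            simp only [starAux, ih, List.reverse_reverse, hmem n, hVn,
              hsplitx n x, hsplit n V, ← hxn]
        have hxn : ∀ n, x n = τ (List.ofFn fun i : Fin n => V i) (V n) := by
          intro n
          show starStrat τ (List.ofFn fun i : Fin n => U i) (U n) = _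
          rw [starStrat, key n]
          simp only [List.reverse_reverse, hmem n]
          rfl
        have hplay : playP2 X τ V = x := by
          funext n
          exact (hxn n).symm
        have hxV : ∀ n, x n ∈ V n := by
          intro n
          rw [hxn n]
          exact hval (List.ofFn fun i : Fin n => V i) (V n) (hVopen n).1 (hVopen n).2
        have hwinV := hwin V (fun n => (hVopen n).1) (fun n => (hVopen n).2)
        rw [hplay] at hwinV
        refine ⟨?_, hwinV.1, hwinV.2⟩
        apply inj_of_ne_lt
        intro m n hmn heq
        exact (hxV n).2 ⟨m, hmn, heq.symm⟩
    · -- P2WinsCDstar → P2WinsCD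
      rintro ⟨τ, hval, hwin⟩
      exact ⟨τ, hval, fun U h1 h2 => ⟨(hwin U h1 h2).2.1, (hwin U h1 h2).2.2⟩⟩
  · constructor
    · -- P1WinsCD → P1WinsCDstar
      rintro ⟨σ, hσ, hwin⟩
      refine ⟨σ, hσ, fun x hx hcon => hwin x hx ⟨hcon.2.1, hcon.2.2⟩⟩
    · -- P1WinsCDstar → P1WinsCD
      rintro ⟨σ, hσ, hwin⟩
      refine ⟨fun h => σ h \ {y | y ∈ h}, ?_, ?_⟩
      · intro h
        exact open_diff_list hinf (hσ h).1 (hσ h).2 _ h.finite_toSet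
      · intro x hx hcon
        have hx' : ∀ n, x n ∈ σ (List.ofFn fun i : Fin n => x i) :=
          fun n => (hx n).1
        have hinj : Function.Injective x := by
          apply inj_of_ne_lt
          intro m n hmn heq
          have := (hx n).2
          exact this (by simp only [List.mem_ofFn]; exact ⟨⟨m, hmn⟩, heq.symm⟩)
        exact hwin x hx' ⟨hinj, hcon.1, hcon.2⟩
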